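/- arXiv:2304.08021 — 4 statements merged into one kernel-verified Lean document; each statement's English description precedes it below -/
import Mathlib

section
/- If T is an invertible hyponormal operator on a complex Hilbert space, then T⁻¹ is also hyponormal. -/
open ContinuousLinearMap

local notation "⟪" x ", " y "⟫_ℂ" => @inner ℂ _ _ x y

/-- An operator `T` on a complex Hilbert space is *hyponormal* if its self-commutator
`T*T - TT*` is a non-negative operator. -/
def Hyponormal {H : Type*} [NormedAddCommGroup H] [InnerProductSpace ℂ H]
    [CompleteSpace H] (T : H →L[ℂ] H) : Prop :=
  (adjoint T * T - T * adjoint T).IsPositive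

theorem inverse_of_hyponormal {H : Type*} [NormedAddCommGroup H] [InnerProductSpace ℂ H]
    [CompleteSpace H] (T : (H →L[ℂ] H)ˣ) (hT : Hyponormal (T : H →L[ℂ] H)) :
    Hyponormal ((T⁻¹ : (H →L[ℂ] H)ˣ) : H →L[ℂ] H) := by
  set A : H →L[ℂ] H := (T : H →L[ℂ] H) with hA
  set S : H →L[ℂ] H := ((T⁻¹ : (H →L[ℂ] H)ˣ) : H →L[ℂ] H) with hS
  have hTS : ∀ x, A (S x) = x := by
    intro x
    have : A * S = 1 := by rw [hA, hS, ← Units.val_mul, mul_inv_cancel, Units.val_one]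
    calc A (S x) = (A * S) x := rfl
    _ = x := by rw [this]; rfl
  -- pointwise norm inequality from hyponormality of T
  have hnorm : ∀ x, ‖adjoint A x‖ ≤ ‖A x‖ := by
    intro x
    have h := hT.2 x
    rw [reApplyInnerSelf_apply] at h
    have h2 : (0 : ℝ) ≤ ‖A x‖ ^ 2 - ‖adjoint A x‖ ^ 2 := by
      have e1 : ⟪(adjoint A * A) x, x⟫_ℂ = ⟪A x, A x⟫_ℂ := adjoint_inner_left A x (A x)
      have e2 : ⟪(A * adjoint A) x, x⟫_ℂ = ⟪adjoint A x, adjoint A x⟫_ℂ := by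
        calc ⟪(A * adjoint A) x, x⟫_ℂ
            = ⟪(adjoint (adjoint A)) (adjoint A x), x⟫_ℂ := by rw [adjoint_adjoint]; rfl
          _ = ⟪adjoint A x, adjoint A x⟫_ℂ := adjoint_inner_left _ _ _
      rw [sub_apply, inner_sub_left, e1, e2, map_sub, inner_self_eq_norm_sq,
        inner_self_eq_norm_sq] at h
      linarith
    nlinarith [norm_nonneg (A x), norm_nonneg (adjoint A x)]
  -- the operator (adjoint S) * A is a contraction
  have hB : ‖adjoint A ∘L S‖ ≤ 1 := by
    apply opNorm_le_bound _ zero_le_one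
    intro x
    calc ‖(adjoint A ∘L S) x‖ = ‖adjoint A (S x)‖ := rfl
      _ ≤ ‖A (S x)‖ := hnorm _
      _ = ‖x‖ := by rw [hTS]
      _ = 1 * ‖x‖ := (one_mul _).symm
  have hC : ‖adjoint S ∘L A‖ ≤ 1 := by
    have : adjoint S ∘L A = adjoint (adjoint A ∘L S) := by
      rw [adjoint_comp, adjoint_adjoint]
    rw [this, LinearIsometryEquiv.norm_map]
    exact hB
  have hnormS : ∀ y, ‖adjoint S y‖ ≤ ‖S y‖ := by
    intro y
    calc ‖adjoint S y‖ = ‖(adjoint S ∘L A) (S y)‖ := by rw [comp_apply, hTS]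
      _ ≤ ‖adjoint S ∘L A‖ * ‖S y‖ := le_opNorm _ _
      _ ≤ 1 * ‖S y‖ := by
          exact mul_le_mul_of_nonneg_right hC (norm_nonneg _)
      _ = ‖S y‖ := one_mul _
  constructor
  · exact isSelfAdjoint_iff_isSymmetric.mp (by simp [IsSelfAdjoint, star_sub, star_mul, star_eq_adjoint, adjoint_adjoint] : IsSelfAdjoint (adjoint S * S - S * adjoint S))
  · intro y
    rw [reApplyInnerSelf_apply]
    have e1 : ⟪(adjoint S * S) y, y⟫_ℂ = ⟪S y, S y⟫_ℂ := adjoint_inner_left S y (S y)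
    have e2 : ⟪(S * adjoint S) y, y⟫_ℂ = ⟪adjoint S y, adjoint S y⟫_ℂ := by
      calc ⟪(S * adjoint S) y, y⟫_ℂ
          = ⟪(adjoint (adjoint S)) (adjoint S y), y⟫_ℂ := by rw [adjoint_adjoint]; rfl
        _ = ⟪adjoint S y, adjoint S y⟫_ℂ := adjoint_inner_left _ _ _
    have h3 : ‖adjoint S y‖ ^ 2 ≤ ‖S y‖ ^ 2 := by
      have := hnormS y
      nlinarith [norm_nonneg (adjoint S y)]
    rw [sub_apply, inner_sub_left, e1, e2, map_sub, inner_self_eq_norm_sq,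
      inner_self_eq_norm_sq]
    linarith
end

section
/- Let T be an invertible bounded operator on a complex Hilbert space whose self-commutator satisfies T*T - TT* = x ⊗ x for some vector x (the rank-one operator h ↦ ⟨h, x⟩x). Then (T*)⁻¹T⁻¹ = (T*T - x⊗x)⁻¹ and T⁻¹(T*)⁻¹ = (TT* + x⊗x)⁻¹, and the self-commutator of T⁻¹ equals (TT*)⁻¹ (x ⊗ x) (T*T)⁻¹; in particular it has rank at most one. -/
open ContinuousLinearMap

/-- The rank-one operator `x ⊗ y : h ↦ ⟨h, y⟩ x` (inner product linear in the first slot). -/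
noncomputable def rankOne {H : Type*} [NormedAddCommGroup H] [InnerProductSpace ℂ H]
    (x y : H) : H →L[ℂ] H :=
  (innerSL ℂ y).smulRight x


lemma rank_conj_rankOne_le_one {H : Type*} [NormedAddCommGroup H] [InnerProductSpace ℂ H]
    (A C : H →L[ℂ] H) (x : H) :
    LinearMap.rank ((A * rankOne x x * C : H →L[ℂ] H) : H →ₗ[ℂ] H) ≤ 1 := by
  have hsub : LinearMap.range ((A * rankOne x x * C : H →L[ℂ] H) : H →ₗ[ℂ] H)
      ≤ Submodule.span ℂ {A x} := by
    rintro y ⟨z, rfl⟩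
    refine Submodule.mem_span_singleton.mpr ⟨inner ℂ x (C z), ?_⟩
    simp [rankOne, ContinuousLinearMap.mul_apply, map_smul]
  calc LinearMap.rank ((A * rankOne x x * C : H →L[ℂ] H) : H →ₗ[ℂ] H)
      ≤ Module.rank ℂ (Submodule.span ℂ ({A x} : Set H)) := Submodule.rank_mono hsub
    _ ≤ 1 := by simpa using rank_span_le (R := ℂ) ({A x} : Set H)

theorem inverse_self_commutator_formula {H : Type*} [NormedAddCommGroup H]
    [InnerProductSpace ℂ H] [CompleteSpace H] (T : (H →L[ℂ] H)ˣ) (x : H)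
    (h : adjoint (T : H →L[ℂ] H) * (T : H →L[ℂ] H)
        - (T : H →L[ℂ] H) * adjoint (T : H →L[ℂ] H) = rankOne x x) :
    adjoint ((T⁻¹ : (H →L[ℂ] H)ˣ) : H →L[ℂ] H) * ((T⁻¹ : (H →L[ℂ] H)ˣ) : H →L[ℂ] H)
        = Ring.inverse (adjoint (T : H →L[ℂ] H) * (T : H →L[ℂ] H) - rankOne x x)
      ∧ ((T⁻¹ : (H →L[ℂ] H)ˣ) : H →L[ℂ] H) * adjoint ((T⁻¹ : (H →L[ℂ] H)ˣ) : H →L[ℂ] H)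
        = Ring.inverse ((T : H →L[ℂ] H) * adjoint (T : H →L[ℂ] H) + rankOne x x)
      ∧ adjoint ((T⁻¹ : (H →L[ℂ] H)ˣ) : H →L[ℂ] H) * ((T⁻¹ : (H →L[ℂ] H)ˣ) : H →L[ℂ] H)
          - ((T⁻¹ : (H →L[ℂ] H)ˣ) : H →L[ℂ] H) * adjoint ((T⁻¹ : (H →L[ℂ] H)ˣ) : H →L[ℂ] H)
        = Ring.inverse ((T : H →L[ℂ] H) * adjoint (T : H →L[ℂ] H)) * rankOne x x
            * Ring.inverse (adjoint (T : H →L[ℂ] H) * (T : H →L[ℂ] H))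
      ∧ LinearMap.rank
          ((adjoint ((T⁻¹ : (H →L[ℂ] H)ˣ) : H →L[ℂ] H) * ((T⁻¹ : (H →L[ℂ] H)ˣ) : H →L[ℂ] H)
            - ((T⁻¹ : (H →L[ℂ] H)ˣ) : H →L[ℂ] H)
              * adjoint ((T⁻¹ : (H →L[ℂ] H)ˣ) : H →L[ℂ] H) : H →L[ℂ] H) : H →ₗ[ℂ] H) ≤ 1 := by
  set S : H →L[ℂ] H := (T : H →L[ℂ] H) with hS
  have hadj : adjoint S = star S := (star_eq_adjoint S).symm
  have hadjinv : adjoint ((T⁻¹ : (H →L[ℂ] H)ˣ) : H →L[ℂ] H) = ((star T)⁻¹ : (H →L[ℂ] H)ˣ) := by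
    rw [← star_eq_adjoint, Units.coe_star_inv]
  have hsub : adjoint S * S - rankOne x x = S * adjoint S := by rw [← h]; abel
  have hadd : S * adjoint S + rankOne x x = adjoint S * S := by rw [← h]; abel
  have e1 : adjoint ((T⁻¹ : (H →L[ℂ] H)ˣ) : H →L[ℂ] H) * ((T⁻¹ : (H →L[ℂ] H)ˣ) : H →L[ℂ] H)
      = Ring.inverse (S * adjoint S) := by
    have : S * adjoint S = ((T * star T : (H →L[ℂ] H)ˣ) : H →L[ℂ] H) := by
      simp [hadj]; rfl
    rw [this, Ring.inverse_unit, mul_inv_rev, Units.val_mul, hadjinv]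
  have e2 : ((T⁻¹ : (H →L[ℂ] H)ˣ) : H →L[ℂ] H) * adjoint ((T⁻¹ : (H →L[ℂ] H)ˣ) : H →L[ℂ] H)
      = Ring.inverse (adjoint S * S) := by
    have : adjoint S * S = ((star T * T : (H →L[ℂ] H)ˣ) : H →L[ℂ] H) := by
      simp [hadj]; rfl
    rw [this, Ring.inverse_unit, mul_inv_rev, Units.val_mul, hadjinv]
  refine ⟨by rw [hsub, e1], by rw [hadd, e2], ?_, ?_⟩
  · rw [e1, e2]
    have hu : S * adjoint S = ((T * star T : (H →L[ℂ] H)ˣ) : H →L[ℂ] H) := by simp [hadj]; rfl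
    have hv : adjoint S * S = ((star T * T : (H →L[ℂ] H)ˣ) : H →L[ℂ] H) := by simp [hadj]; rfl
    rw [hu, hv, Ring.inverse_unit, Ring.inverse_unit, ← h, hu, hv]
    set u : (H →L[ℂ] H)ˣ := T * star T
    set v : (H →L[ℂ] H)ˣ := star T * T
    have : ((u⁻¹ : (H →L[ℂ] H)ˣ) : H →L[ℂ] H) * ((v : (H →L[ℂ] H)ˣ) - (u : (H →L[ℂ] H)ˣ))
        * ((v⁻¹ : (H →L[ℂ] H)ˣ) : H →L[ℂ] H)
        = ((u⁻¹ : (H →L[ℂ] H)ˣ) : H →L[ℂ] H) - ((v⁻¹ : (H →L[ℂ] H)ˣ) : H →L[ℂ] H) := by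
      simp [mul_sub, sub_mul, mul_assoc, Units.mul_inv, Units.inv_mul_cancel_left]
    rw [this]
  · have key : adjoint ((T⁻¹ : (H →L[ℂ] H)ˣ) : H →L[ℂ] H) * ((T⁻¹ : (H →L[ℂ] H)ˣ) : H →L[ℂ] H)
        - ((T⁻¹ : (H →L[ℂ] H)ˣ) : H →L[ℂ] H) * adjoint ((T⁻¹ : (H →L[ℂ] H)ˣ) : H →L[ℂ] H)
        = Ring.inverse (S * adjoint S) * rankOne x x * Ring.inverse (adjoint S * S) := by
      rw [e1, e2]
      have hu : S * adjoint S = ((T * star T : (H →L[ℂ] H)ˣ) : H →L[ℂ] H) := by simp [hadj]; rfl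
      have hv : adjoint S * S = ((star T * T : (H →L[ℂ] H)ˣ) : H →L[ℂ] H) := by simp [hadj]; rfl
      rw [hu, hv, Ring.inverse_unit, Ring.inverse_unit, ← h, hu, hv]
      set u : (H →L[ℂ] H)ˣ := T * star T
      set v : (H →L[ℂ] H)ˣ := star T * T
      simp [mul_sub, sub_mul, mul_assoc, Units.mul_inv, Units.inv_mul_cancel_left]
    rw [key]
    exact rank_conj_rankOne_le_one _ _ _
end

section
/- Let T be an invertible hyponormal operator with rank-one self-commutator [T*,T] = x ⊗ x. Then the self-commutator of T⁻¹ has rank exactly one provided x ≠ 0. -/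
open ContinuousLinearMap

lemma rankOne_apply {H : Type*} [NormedAddCommGroup H] [InnerProductSpace ℂ H]
    (x y h : H) : rankOne x y h = (inner ℂ y h : ℂ) • x := by
  simp [rankOne]

lemma adjoint_mul' {H : Type*} [NormedAddCommGroup H] [InnerProductSpace ℂ H]
    [CompleteSpace H] (A B : H →L[ℂ] H) : adjoint (A * B) = adjoint B * adjoint A :=
  adjoint_comp A B

lemma comp_rankOne {H : Type*} [NormedAddCommGroup H] [InnerProductSpace ℂ H]
    (A : H →L[ℂ] H) (x y : H) : A * rankOne x y = rankOne (A x) y := by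
  ext h
  simp [rankOne_apply, mul_apply]

lemma rankOne_comp {H : Type*} [NormedAddCommGroup H] [InnerProductSpace ℂ H]
    [CompleteSpace H] (A : H →L[ℂ] H) (x y : H) :
    rankOne x y * A = rankOne x (adjoint A y) := by
  ext h
  simp [rankOne_apply, mul_apply, adjoint_inner_left]

lemma rank_rankOne {H : Type*} [NormedAddCommGroup H] [InnerProductSpace ℂ H]
    {x y : H} (hx : x ≠ 0) (hy : y ≠ 0) :
    LinearMap.rank ((rankOne x y : H →L[ℂ] H) : H →ₗ[ℂ] H) = 1 := by
  have hy' : (inner ℂ y y : ℂ) ≠ 0 := inner_self_ne_zero.mpr hy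
  refine rank_eq_one (R := ℂ) ⟨x, ?_⟩ ?_ ?_
  · refine ⟨((inner ℂ y y : ℂ))⁻¹ • y, ?_⟩
    show rankOne x y _ = x
    rw [rankOne_apply, inner_smul_right, inv_mul_cancel₀ hy', one_smul]
  · exact fun hc => hx (by simpa using congrArg Subtype.val hc)
  · rintro ⟨w, hw⟩
    obtain ⟨h, rfl⟩ := hw
    exact ⟨inner ℂ y h, Subtype.ext (by simp [rankOne_apply])⟩

theorem rank_self_commutator_inverse_eq_one {H : Type*} [NormedAddCommGroup H]
    [InnerProductSpace ℂ H] [CompleteSpace H] (T : (H →L[ℂ] H)ˣ) (x : H) (hx : x ≠ 0)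
    (h : adjoint (T : H →L[ℂ] H) * (T : H →L[ℂ] H)
        - (T : H →L[ℂ] H) * adjoint (T : H →L[ℂ] H) = rankOne x x) :
    LinearMap.rank
        ((adjoint ((T⁻¹ : (H →L[ℂ] H)ˣ) : H →L[ℂ] H) * ((T⁻¹ : (H →L[ℂ] H)ˣ) : H →L[ℂ] H)
          - ((T⁻¹ : (H →L[ℂ] H)ˣ) : H →L[ℂ] H)
            * adjoint ((T⁻¹ : (H →L[ℂ] H)ˣ) : H →L[ℂ] H) : H →L[ℂ] H) : H →ₗ[ℂ] H) = 1 := by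
  set Tc : H →L[ℂ] H := (T : H →L[ℂ] H) with hTc
  set S : H →L[ℂ] H := ((T⁻¹ : (H →L[ℂ] H)ˣ) : H →L[ℂ] H) with hS
  have hTS : Tc * S = 1 := T.mul_inv
  have hST : S * Tc = 1 := T.inv_mul
  have haTS : adjoint S * adjoint Tc = 1 := by rw [← adjoint_mul', hTS]; rw [← star_eq_adjoint]; exact star_one _
  have haST : adjoint Tc * adjoint S = 1 := by rw [← adjoint_mul', hST]; rw [← star_eq_adjoint]; exact star_one _
  set P : H →L[ℂ] H := adjoint S * S with hP
  set Q : H →L[ℂ] H := S * adjoint S with hQ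
  have key : adjoint S * S - S * adjoint S = P * rankOne x x * Q := by
    rw [← h, hP, hQ]
    have e1 : (adjoint S * S) * (adjoint Tc * Tc) * (S * adjoint S) = adjoint S * S := by
      simp only [mul_assoc]
      rw [← mul_assoc Tc S, hTS, one_mul, haST, mul_one]
    have e2 : (adjoint S * S) * (Tc * adjoint Tc) * (S * adjoint S) = S * adjoint S := by
      simp only [mul_assoc]
      rw [← mul_assoc S Tc, hST, one_mul, ← mul_assoc, haTS, one_mul]
    rw [mul_sub, sub_mul, e1, e2]
  rw [key, comp_rankOne, rankOne_comp]
  have hQadj : adjoint Q = Q := by rw [hQ, adjoint_mul', adjoint_adjoint]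
  rw [hQadj]
  have hPinj : ∀ v : H, P v = 0 → v = 0 := by
    intro v hv
    have h2 : adjoint Tc * P = S := by rw [hP, ← mul_assoc, haST, one_mul]
    have hSv : S v = 0 := by
      rw [← h2]; show adjoint Tc (P v) = 0; rw [hv, map_zero]
    have h3 : (Tc * S) v = v := by rw [hTS]; rfl
    rw [mul_apply_eq_comp, hSv, map_zero] at h3
    exact h3.symm
  have hQinj : ∀ v : H, Q v = 0 → v = 0 := by
    intro v hv
    have h2 : Tc * Q = adjoint S := by rw [hQ, ← mul_assoc, hTS, one_mul]
    have hSv : adjoint S v = 0 := by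
      rw [← h2]; show Tc (Q v) = 0; rw [hv, map_zero]
    have h3 : (adjoint Tc * adjoint S) v = v := by rw [haST]; rfl
    rw [mul_apply_eq_comp, hSv, map_zero] at h3
    exact h3.symm
  exact rank_rankOne (fun hc => hx (hPinj x hc)) (fun hc => hx (hQinj x hc))
end

section
/- Let φ(z) = β(z - a)/(1 - āz) with |β| = 1 and |a| < 1, a ≠ 0, and let T be a bounded operator with σ(T) ⊆ closed unit disc. Writing φ(z) = -β/ā + c/(z - 1/ā)·β for some constant, one has the identity: [φ(T)*, φ(T)] = |c|² ((T - ā⁻¹)(T* - a⁻¹))⁻¹ [T*, T] ((T* - a⁻¹)(T - ā⁻¹))⁻¹ where c = (a - ā⁻¹)/ā (up to the unimodular factor β which does not affect the self-commutator). In particular, if [T*,T] ≥ 0 then [φ(T)*, φ(T)] ≥ 0, and if [T*,T] has rank one then so does [φ(T)*, φ(T)]. -/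
open ContinuousLinearMap

private lemma ringInverse_eq {M₀ : Type*} [MonoidWithZero M₀] {x y : M₀}
    (h1 : x * y = 1) (h2 : y * x = 1) : Ring.inverse x = y :=
  Ring.inverse_unit ⟨x, y, h1, h2⟩

private lemma rank_conj {K V : Type*} [Field K] [AddCommGroup V] [Module K V]
    (f : V →ₗ[K] V) (e₁ e₂ : V ≃ₗ[K] V) :
    LinearMap.rank (e₁.toLinearMap ∘ₗ f ∘ₗ e₂.toLinearMap) = LinearMap.rank f := by
  unfold LinearMap.rank
  rw [LinearMap.range_comp, LinearMap.range_comp_of_range_eq_top f e₂.range,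
    LinearEquiv.rank_map_eq]

private lemma isSelfAdjoint_commutator {H : Type*} [NormedAddCommGroup H]
    [InnerProductSpace ℂ H] [CompleteSpace H] (w : H →L[ℂ] H) :
    IsSelfAdjoint (adjoint w * w - w * adjoint w) := by
  have : star (adjoint w * w - w * adjoint w) = adjoint w * w - w * adjoint w := by
    simp only [← star_eq_adjoint, star_sub, star_mul, star_star]
  exact this

set_option maxHeartbeats 2000000 in
theorem mobius_self_commutator {H : Type*} [NormedAddCommGroup H] [InnerProductSpace ℂ H]
    [CompleteSpace H] (T : H →L[ℂ] H) (hspec : spectrum ℂ T ⊆ Metric.closedBall (0 : ℂ) 1)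
    (a : ℂ) (ha0 : a ≠ 0) (ha1 : ‖a‖ < 1) (β : ℂ) (hβ : ‖β‖ = 1) :
    -- `W = φ(T) = β (T - a)(1 - āT)⁻¹` and `c = (a - ā⁻¹)/ā`
    (∀ W : H →L[ℂ] H, ∀ c : ℂ,
      W = β • ((T - a • 1) * Ring.inverse (1 - (starRingEnd ℂ a) • T)) →
      c = (a - (starRingEnd ℂ a)⁻¹) / starRingEnd ℂ a →
      adjoint W * W - W * adjoint W
        = ((‖c‖ ^ 2 : ℝ) : ℂ) •
            (Ring.inverse ((T - ((starRingEnd ℂ a)⁻¹) • 1) * (adjoint T - (a⁻¹) • 1))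
              * (adjoint T * T - T * adjoint T)
              * Ring.inverse ((adjoint T - (a⁻¹) • 1) * (T - ((starRingEnd ℂ a)⁻¹) • 1))))
      ∧ (Hyponormal T →
          Hyponormal (β • ((T - a • 1) * Ring.inverse (1 - (starRingEnd ℂ a) • T))))
      ∧ (LinearMap.rank ((adjoint T * T - T * adjoint T : H →L[ℂ] H) : H →ₗ[ℂ] H) = 1 →
          LinearMap.rank
            (((fun W => adjoint W * W - W * adjoint W)
              (β • ((T - a • 1) * Ring.inverse (1 - (starRingEnd ℂ a) • T))) :
                H →L[ℂ] H) : H →ₗ[ℂ] H) = 1) := by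
  set s : ℂ := starRingEnd ℂ a with hs_def
  have hs0 : s ≠ 0 := by simp [hs_def, ha0]
  have hβ0 : β ≠ 0 := by intro h; rw [h] at hβ; simp at hβ
  have hz2 : ∀ z : ℂ, starRingEnd ℂ z * z = ((‖z‖ ^ 2 : ℝ) : ℂ) := by
    intro z
    rw [← Complex.normSq_eq_conj_mul_self]
    norm_cast
    rw [Complex.sq_norm]
  -- spectrum fact
  have hnot : s⁻¹ ∉ spectrum ℂ T := by
    intro h
    have h2 := hspec h
    rw [Metric.mem_closedBall, dist_zero_right] at h2
    have hsnorm : ‖s‖ = ‖a‖ := by simp [hs_def]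
    have h3 : ‖s⁻¹‖ = ‖a‖⁻¹ := by rw [norm_inv, hsnorm]
    rw [h3] at h2
    have h4 : (0:ℝ) < ‖a‖ := norm_pos_iff.mpr ha0
    have := (inv_le_one₀ h4).mp h2
    linarith
  have hAunit : IsUnit (T - s⁻¹ • (1 : H →L[ℂ] H)) := by
    have := spectrum.notMem_iff.mp hnot
    rw [Algebra.algebraMap_eq_smul_one] at this
    simpa using this.neg
  set A : H →L[ℂ] H := T - s⁻¹ • 1 with hA_def
  obtain ⟨Ai, hAAi, hAiA⟩ : ∃ Ai, A * Ai = 1 ∧ Ai * A = 1 := by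
    obtain ⟨u, hu⟩ := hAunit
    exact ⟨↑u⁻¹, by rw [← hu]; exact u.mul_inv, by rw [← hu]; exact u.inv_mul⟩
  set B : H →L[ℂ] H := adjoint T - a⁻¹ • 1 with hB_def
  have hBA : B = adjoint A := by
    rw [hA_def, ← star_eq_adjoint, star_sub, star_smul, star_one, star_eq_adjoint, hB_def]
    simp [hs_def, map_inv₀]
  set Bi : H →L[ℂ] H := adjoint Ai with hBi_def
  have hBBi : B * Bi = 1 := by
    rw [hBA, hBi_def, ← star_eq_adjoint, ← star_eq_adjoint, ← star_mul, hAiA, star_one]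
  have hBiB : Bi * B = 1 := by
    rw [hBA, hBi_def, ← star_eq_adjoint, ← star_eq_adjoint, ← star_mul, hAAi, star_one]
  -- nonvanishing scalars
  have hsa : s⁻¹ - a ≠ 0 := by
    intro h
    have h2 : s⁻¹ = a := by
      have := sub_eq_zero.mp h; linear_combination this
    have h3 : ‖a‖⁻¹ = ‖a‖ := by
      conv_rhs => rw [← h2]
      rw [norm_inv, hs_def, RCLike.norm_conj]
    have h4 : (0:ℝ) < ‖a‖ := norm_pos_iff.mpr ha0
    have h5 : ‖a‖ * ‖a‖ = 1 := by
      have h6 := congrArg (· * ‖a‖) h3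
      simp only [inv_mul_cancel₀ (ne_of_gt h4)] at h6
      exact h6.symm
    nlinarith [h4, ha1, h5]
  set p : ℂ := β * (-s)⁻¹ with hp_def
  set q : ℂ := p * (s⁻¹ - a) with hq_def
  have hq0 : q ≠ 0 := by
    rw [hq_def, hp_def]
    exact mul_ne_zero (mul_ne_zero hβ0 (by simpa using hs0)) hsa
  -- 1 - s • T = (-s) • A
  have h1s : (1 : H →L[ℂ] H) - s • T = (-s) • A := by
    rw [hA_def, smul_sub, smul_smul]
    rw [neg_mul, mul_inv_cancel₀ hs0, neg_smul, neg_smul, one_smul, sub_neg_eq_add]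
    abel
  have hRinv1 : Ring.inverse ((1 : H →L[ℂ] H) - s • T) = (-s)⁻¹ • Ai := by
    rw [h1s]
    have hns : (-s) * (-s)⁻¹ = 1 := mul_inv_cancel₀ (by simpa using hs0)
    have hns' : (-s)⁻¹ * (-s) = 1 := inv_mul_cancel₀ (by simpa using hs0)
    exact ringInverse_eq
      (by rw [smul_mul_assoc, mul_smul_comm, smul_smul, hns, hAAi, one_smul])
      (by rw [smul_mul_assoc, mul_smul_comm, smul_smul, hns', hAiA, one_smul])
  -- W decomposition
  have hWdec : β • ((T - a • 1) * Ring.inverse (1 - s • T)) = p • 1 + q • Ai := by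
    rw [hRinv1]
    have hTa : T - a • (1 : H →L[ℂ] H) = A + (s⁻¹ - a) • 1 := by
      rw [hA_def, sub_smul]; abel
    rw [hTa, add_mul, smul_mul_assoc, one_mul, mul_smul_comm, smul_add, smul_smul, smul_smul,
      smul_smul, hAAi]
    rw [hq_def, hp_def]
    match_scalars <;> ring
  -- units
  set uA : (H →L[ℂ] H)ˣ := ⟨A, Ai, hAAi, hAiA⟩ with huA_def
  set uB : (H →L[ℂ] H)ˣ := ⟨B, Bi, hBBi, hBiB⟩ with huB_def
  have hRinvAB : Ring.inverse (A * B) = Bi * Ai := by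
    refine ringInverse_eq ?_ ?_
    · have h1 : (uA*uB)*(uB⁻¹*uA⁻¹) = 1 := by group
      exact congrArg Units.val h1
    · have h1 : (uB⁻¹*uA⁻¹)*(uA*uB) = 1 := by group
      exact congrArg Units.val h1
  have hRinvBA : Ring.inverse (B * A) = Ai * Bi := by
    refine ringInverse_eq ?_ ?_
    · have h1 : (uB*uA)*(uA⁻¹*uB⁻¹) = 1 := by group
      exact congrArg Units.val h1
    · have h1 : (uA⁻¹*uB⁻¹)*(uB*uA) = 1 := by group
      exact congrArg Units.val h1
  have hC : adjoint T * T - T * adjoint T = B * A - A * B := by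
    rw [hA_def, hB_def]
    simp only [mul_sub, sub_mul, smul_mul_assoc, mul_smul_comm, smul_smul, mul_one, one_mul]
    module
  have hkey : Bi * Ai * (B * A - A * B) * (Ai * Bi) = Bi * Ai - Ai * Bi := by
    have v1 : Bi * Ai * (B * A) * (Ai * Bi) = Bi * Ai := by
      have h1 : (uB⁻¹*uA⁻¹)*(uB*uA)*(uA⁻¹*uB⁻¹) = uB⁻¹*uA⁻¹ := by group
      exact congrArg Units.val h1
    have v2 : Bi * Ai * (A * B) * (Ai * Bi) = Ai * Bi := by
      have h1 : (uB⁻¹*uA⁻¹)*(uA*uB)*(uA⁻¹*uB⁻¹) = uA⁻¹*uB⁻¹ := by group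
      exact congrArg Units.val h1
    rw [mul_sub, sub_mul, v1, v2]
  have hstarW : adjoint (p • 1 + q • Ai)
      = (starRingEnd ℂ p) • 1 + (starRingEnd ℂ q) • Bi := by
    rw [← star_eq_adjoint, star_add, star_smul, star_smul, star_one, star_eq_adjoint,
      ← hBi_def, starRingEnd_apply, starRingEnd_apply]
  have hexp : adjoint (p • 1 + q • Ai) * (p • 1 + q • Ai)
        - (p • 1 + q • Ai) * adjoint (p • 1 + q • Ai)
      = (starRingEnd ℂ q * q) • (Bi * Ai - Ai * Bi) := by
    rw [hstarW]
    simp only [add_mul, mul_add, smul_mul_assoc, mul_smul_comm, smul_smul, mul_one, one_mul]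
    module
  -- quadratic form of the commutator of the inverses
  have hrecomm : ∀ x : H,
      RCLike.re (inner ℂ ((Bi * Ai - Ai * Bi) x) x : ℂ) = ‖Ai x‖ ^ 2 - ‖Bi x‖ ^ 2 := by
    intro x
    have h1 : (Bi * Ai - Ai * Bi) x = Bi (Ai x) - Ai (Bi x) := by
      simp [ContinuousLinearMap.sub_apply, ContinuousLinearMap.mul_apply]
    have h2 : (inner ℂ (Bi (Ai x)) x : ℂ) = inner ℂ (Ai x) (Ai x) := by
      rw [hBi_def]; exact adjoint_inner_left Ai x (Ai x)
    have h3 : (inner ℂ (Ai (Bi x)) x : ℂ) = inner ℂ (Bi x) (Bi x) := by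
      have hAiB : Ai = adjoint Bi := by rw [hBi_def, adjoint_adjoint]
      conv_lhs => rw [hAiB]
      exact adjoint_inner_left Bi x (Bi x)
    rw [h1, inner_sub_left, h2, h3, map_sub, inner_self_eq_norm_sq, inner_self_eq_norm_sq]
  refine ⟨?_, ?_, ?_⟩
  · -- the main identity
    intro W c hW hc
    rw [hWdec] at hW
    subst hW
    rw [hexp, hRinvAB, hRinvBA, hC, hkey]
    congr 1
    have hqc : q = β * c := by
      rw [hq_def, hp_def, hc]
      field_simp
      ring
    rw [hqc, map_mul]
    have hb : starRingEnd ℂ β * β = 1 := by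
      rw [hz2 β, hβ]; norm_num
    calc starRingEnd ℂ β * starRingEnd ℂ c * (β * c)
        = (starRingEnd ℂ β * β) * (starRingEnd ℂ c * c) := by ring
      _ = starRingEnd ℂ c * c := by rw [hb, one_mul]
      _ = ((‖c‖ ^ 2 : ℝ) : ℂ) := hz2 c
  · -- hyponormality is preserved
    intro hT
    have hCpos : ((B * A - A * B) : H →L[ℂ] H).IsPositive := hC ▸ hT
    have hBAle : ∀ y, ‖B y‖ ≤ ‖A y‖ := by
      intro y
      have h := hCpos.2 y
      rw [reApplyInnerSelf_apply] at h
      have h1 : (B * A - A * B) y = B (A y) - A (B y) := by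
        simp [ContinuousLinearMap.sub_apply, ContinuousLinearMap.mul_apply]
      have h2 : (inner ℂ (B (A y)) y : ℂ) = inner ℂ (A y) (A y) := by
        rw [hBA]; exact adjoint_inner_left A y (A y)
      have h3 : (inner ℂ (A (B y)) y : ℂ) = inner ℂ (B y) (B y) := by
        have hAB : A = adjoint B := by rw [hBA, adjoint_adjoint]
        conv_lhs => rw [hAB]
        exact adjoint_inner_left B y (B y)
      rw [h1, inner_sub_left, h2, h3, map_sub, inner_self_eq_norm_sq,
        inner_self_eq_norm_sq] at h
      nlinarith [norm_nonneg (A y), norm_nonneg (B y)]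
    have hAAix : ∀ z, A (Ai z) = z := by
      intro z
      have := DFunLike.congr_fun hAAi z
      simpa [ContinuousLinearMap.mul_apply, ContinuousLinearMap.one_apply] using this
    have hKn : ‖B * Ai‖ ≤ 1 := by
      refine opNorm_le_bound _ zero_le_one fun z => ?_
      rw [one_mul, ContinuousLinearMap.mul_apply]
      calc ‖B (Ai z)‖ ≤ ‖A (Ai z)‖ := hBAle _
        _ = ‖z‖ := by rw [hAAix]
    have hstarK : star (B * Ai) = Bi * A := by
      rw [star_mul, star_eq_adjoint, star_eq_adjoint, ← hBi_def, hBA, adjoint_adjoint]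
    have hKn2 : ‖Bi * A‖ ≤ 1 := by rw [← hstarK, norm_star]; exact hKn
    have hnormle : ∀ x, ‖Bi x‖ ≤ ‖Ai x‖ := by
      intro x
      have h1 : Bi x = (Bi * A) (Ai x) := by
        rw [ContinuousLinearMap.mul_apply, hAAix]
      rw [h1]
      calc ‖(Bi * A) (Ai x)‖ ≤ ‖Bi * A‖ * ‖Ai x‖ := le_opNorm _ _
        _ ≤ 1 * ‖Ai x‖ := mul_le_mul_of_nonneg_right hKn2 (norm_nonneg _)
        _ = ‖Ai x‖ := one_mul _
    rw [hWdec]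
    show (adjoint (p • 1 + q • Ai) * (p • 1 + q • Ai)
        - (p • 1 + q • Ai) * adjoint (p • 1 + q • Ai)).IsPositive
    constructor
    · exact (isSelfAdjoint_commutator _).isSymmetric
    · intro x
      rw [reApplyInnerSelf_apply, hexp]
      have h3 : (inner ℂ (((starRingEnd ℂ q * q) • (Bi * Ai - Ai * Bi)) x) x : ℂ)
          = (starRingEnd ℂ q * q) * inner ℂ ((Bi * Ai - Ai * Bi) x) x := by
        rw [ContinuousLinearMap.smul_apply, inner_smul_left, map_mul, Complex.conj_conj]
        ring
      rw [h3, hz2 q]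
      have h4 : RCLike.re (((‖q‖ ^ 2 : ℝ) : ℂ) * inner ℂ ((Bi * Ai - Ai * Bi) x) x)
          = ‖q‖ ^ 2 * RCLike.re (inner ℂ ((Bi * Ai - Ai * Bi) x) x : ℂ) := by
        simp only [RCLike.re_to_complex, Complex.re_ofReal_mul]
      rw [h4, hrecomm x]
      have h5 : ‖Bi x‖ ^ 2 ≤ ‖Ai x‖ ^ 2 :=
        pow_le_pow_left₀ (norm_nonneg _) (hnormle x) 2
      have h6 : (0:ℝ) ≤ ‖q‖ ^ 2 := sq_nonneg _
      nlinarith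
  · -- rank one is preserved
    intro hrank
    have hk0 : starRingEnd ℂ q * q ≠ 0 := mul_ne_zero (by simpa using hq0) hq0
    set P : H →L[ℂ] H := (starRingEnd ℂ q * q) • (Bi * Ai) with hP_def
    set Pi : H →L[ℂ] H := (starRingEnd ℂ q * q)⁻¹ • (A * B) with hPi_def
    set Q : H →L[ℂ] H := Ai * Bi with hQ_def
    set Qi : H →L[ℂ] H := B * A with hQi_def
    have hBiAiAB : (Bi * Ai) * (A * B) = 1 := by
      have h1 : (uB⁻¹*uA⁻¹)*(uA*uB) = 1 := by group
      exact congrArg Units.val h1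
    have hABBiAi : (A * B) * (Bi * Ai) = 1 := by
      have h1 : (uA*uB)*(uB⁻¹*uA⁻¹) = 1 := by group
      exact congrArg Units.val h1
    have hPPi : P * Pi = 1 := by
      rw [hP_def, hPi_def, smul_mul_assoc, mul_smul_comm, smul_smul,
        mul_inv_cancel₀ hk0, hBiAiAB, one_smul]
    have hPiP : Pi * P = 1 := by
      rw [hP_def, hPi_def, smul_mul_assoc, mul_smul_comm, smul_smul,
        inv_mul_cancel₀ hk0, hABBiAi, one_smul]
    have hQQi : Q * Qi = 1 := by
      rw [hQ_def, hQi_def]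
      have h1 : (uA⁻¹*uB⁻¹)*(uB*uA) = 1 := by group
      exact congrArg Units.val h1
    have hQiQ : Qi * Q = 1 := by
      rw [hQ_def, hQi_def]
      have h1 : (uB*uA)*(uA⁻¹*uB⁻¹) = 1 := by group
      exact congrArg Units.val h1
    let e₁ : H ≃ₗ[ℂ] H := LinearEquiv.ofLinear (P : H →ₗ[ℂ] H) (Pi : H →ₗ[ℂ] H)
      (LinearMap.ext fun x => by
        simpa [ContinuousLinearMap.mul_apply] using DFunLike.congr_fun hPPi x)
      (LinearMap.ext fun x => by
        simpa [ContinuousLinearMap.mul_apply] using DFunLike.congr_fun hPiP x)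
    let e₂ : H ≃ₗ[ℂ] H := LinearEquiv.ofLinear (Q : H →ₗ[ℂ] H) (Qi : H →ₗ[ℂ] H)
      (LinearMap.ext fun x => by
        simpa [ContinuousLinearMap.mul_apply] using DFunLike.congr_fun hQQi x)
      (LinearMap.ext fun x => by
        simpa [ContinuousLinearMap.mul_apply] using DFunLike.congr_fun hQiQ x)
    have hfact : adjoint (p • 1 + q • Ai) * (p • 1 + q • Ai)
          - (p • 1 + q • Ai) * adjoint (p • 1 + q • Ai)
        = P * ((adjoint T * T - T * adjoint T) * Q) := by
      rw [hexp, hC, ← hkey, mul_assoc, ← smul_mul_assoc, hP_def, hQ_def]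
    beta_reduce
    rw [hWdec, hfact]
    have hlin : (((P * ((adjoint T * T - T * adjoint T) * Q)) : H →L[ℂ] H) : H →ₗ[ℂ] H)
        = e₁.toLinearMap ∘ₗ
            (((adjoint T * T - T * adjoint T : H →L[ℂ] H) : H →ₗ[ℂ] H) ∘ₗ e₂.toLinearMap) := by
      ext x
      simp [e₁, e₂, ContinuousLinearMap.mul_apply]
    rw [hlin]
    rw [rank_conj]
    exact hrank
end
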